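/- Let p be a prime and let A be a non-confluent (d+1)×(d+1) integer matrix. Set F = diag(p,1,…,1) ∈ Mat(d+1, ℤ). Then there exist r ≥ 0, matrices P₁,…,P_r, P ∈ GL(d+1, ℤ), and a d×(d+1) integer matrix B which is sub-non-confluent and sub-p-nondegenerate, such that P · F⁻¹P_r ⋯ F⁻¹P₁ · A = B̂. -/

import Mathlib

open Finset

/-- `A` is `p`-nondegenerate: for every subset `θ` of the column indices, the rank over
`ℚ` of the submatrix `A[θ]` equals the rank over `𝔽_p` of its reduction modulo `p`. -/
def PNondeg (p : ℕ) {d n : ℕ} (A : Matrix (Fin (d + 1)) (Fin n) ℤ) : Prop :=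
  ∀ θ : Finset (Fin n),
    ((A.submatrix id (fun j : θ => (j : Fin n))).map (Int.cast : ℤ → ℚ)).rank =
      ((A.submatrix id (fun j : θ => (j : Fin n))).map (Int.cast : ℤ → ZMod p)).rank

/-- The matrix `F = diag(p, 1, …, 1) ∈ Mat(d+1, ℤ)`. -/
def Fmat (p d : ℕ) : Matrix (Fin (d + 1)) (Fin (d + 1)) ℤ :=
  Matrix.diagonal (fun i => if i = 0 then (p : ℤ) else 1)

/-- The rational matrix `F⁻¹ P_r ⋯ F⁻¹ P_1 A`, with `P i = P_{i+1}`. -/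
noncomputable def tower (p d : ℕ) (A : Matrix (Fin (d + 1)) (Fin (d + 1)) ℤ) :
    (r : ℕ) → (Fin r → Matrix (Fin (d + 1)) (Fin (d + 1)) ℤ) →
      Matrix (Fin (d + 1)) (Fin (d + 1)) ℚ
  | 0, _ => A.map (Int.cast : ℤ → ℚ)
  | r + 1, P =>
      ((Fmat p d).map (Int.cast : ℤ → ℚ))⁻¹ *
        ((P (Fin.last r)).map (Int.cast : ℤ → ℚ)) *
        tower p d A r (fun i => P i.castSucc)

/-- `B̂`: the `(d+1) × n` matrix obtained by prepending the row `(1, …, 1)` to the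
`d × n` matrix `B`. -/
def hatMat {d n : ℕ} (B : Matrix (Fin d) (Fin n) ℤ) : Matrix (Fin (d + 1)) (Fin n) ℤ :=
  Matrix.of fun i j => Fin.cases 1 (fun i' => B i' j) i

/-- `A` is standard non-confluent: its first row is `(1, …, 1)` and it has rank `d + 1`
over `ℚ`. -/
def StdNonConfluent {d n : ℕ} (A : Matrix (Fin (d + 1)) (Fin n) ℤ) : Prop :=
  (∀ j, A 0 j = 1) ∧ (A.map (Int.cast : ℤ → ℚ)).rank = d + 1

/-- `A` is non-confluent: `P * A` is standard non-confluent for some `P ∈ GL(d+1, ℤ)`. -/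
def NonConfluent {d n : ℕ} (A : Matrix (Fin (d + 1)) (Fin n) ℤ) : Prop :=
  ∃ P : Matrix (Fin (d + 1)) (Fin (d + 1)) ℤ, IsUnit P.det ∧ StdNonConfluent (P * A)

/-- `B` is sub-non-confluent: `B̂` has rank `d + 1` over `ℚ`. -/
def SubNonConfluent {d n : ℕ} (B : Matrix (Fin d) (Fin n) ℤ) : Prop :=
  ((hatMat B).map (Int.cast : ℤ → ℚ)).rank = d + 1

/-- `B` is sub-`p`-nondegenerate: `B̂` is `p`-nondegenerate. -/
def SubPNondeg (p : ℕ) {d n : ℕ} (B : Matrix (Fin d) (Fin n) ℤ) : Prop :=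
  PNondeg p (hatMat B)


open Matrix

/-- Extend a vector `w` admitting an integer relation `∑ c i * w i = 1` to a
unimodular matrix with first row `w`. -/
lemma exists_unimodular_row {n : ℕ} (w c : Fin (n + 1) → ℤ)
    (hc : ∑ i, c i * w i = 1) :
    ∃ P : Matrix (Fin (n + 1)) (Fin (n + 1)) ℤ, IsUnit P.det ∧ P 0 = w := by
  classical
  let φ : (Fin (n + 1) → ℤ) →ₗ[ℤ] ℤ :=
    { toFun := fun x => ∑ i, c i * x i
      map_add' := fun x y => by simp [mul_add, Finset.sum_add_distrib]
      map_smul' := fun r x => by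
        simp only [smul_eq_mul, Pi.smul_apply, RingHom.id_apply, Finset.mul_sum]
        exact Finset.sum_congr rfl fun i _ => by ring }
  have hφw : φ w = 1 := hc
  obtain ⟨m, bK⟩ := Submodule.basisOfPid (Pi.basisFun ℤ (Fin (n + 1))) (LinearMap.ker φ)
  have hli : ∀ (a : ℤ), ∀ x ∈ LinearMap.ker φ, a • w + x = 0 → a = 0 := by
    intro a x hx h
    have h0 : φ (a • w + x) = a := by
      rw [map_add, LinearMap.map_smul, LinearMap.mem_ker.mp hx, add_zero, hφw,
        smul_eq_mul, mul_one]
    rw [h, map_zero] at h0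
    exact h0.symm
  have hsp : ∀ z : Fin (n + 1) → ℤ, ∃ a : ℤ, z + a • w ∈ LinearMap.ker φ := by
    intro z
    refine ⟨-φ z, ?_⟩
    rw [LinearMap.mem_ker, map_add, LinearMap.map_smul, hφw, smul_eq_mul, mul_one]
    simp
  let b' : Module.Basis (Fin (m + 1)) ℤ (Fin (n + 1) → ℤ) := Module.Basis.mkFinCons w bK hli hsp
  have hcard : m + 1 = n + 1 := by
    have h1 := Module.finrank_eq_card_basis b'
    have h2 := Module.finrank_eq_card_basis (Pi.basisFun ℤ (Fin (n + 1)))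
    rw [h1] at h2
    have : m = n := by simpa using h2
    omega
  let b'' : Module.Basis (Fin (n + 1)) ℤ (Fin (n + 1) → ℤ) := b'.reindex (finCongr hcard)
  have hb0 : b'' 0 = w := by
    have : (finCongr hcard).symm 0 = 0 := by ext; simp
    rw [Module.Basis.reindex_apply, this]
    simp [b', Module.Basis.coe_mkFinCons]
  let e₀ := Pi.basisFun ℤ (Fin (n + 1))
  refine ⟨Matrix.of fun i j => b'' i j, ?_, funext fun j => by simp [hb0]⟩
  have hPT : (Matrix.of fun i j => b'' i j) = (e₀.toMatrix ⇑b'')ᵀ := by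
    ext i j
    simp [Module.Basis.toMatrix_apply, e₀]
  rw [hPT, Matrix.det_transpose]
  exact IsUnit.of_mul_eq_one _ (by
    rw [← Matrix.det_mul, Module.Basis.toMatrix_mul_toMatrix_flip, Matrix.det_one])


lemma rank_submatrix_unit {K : Type*} [Field K] {n : ℕ} {α : Type*} [Fintype α] [DecidableEq α]
    (A : Matrix (Fin n) (Fin n) K) (hA : IsUnit A.det) (g : α → Fin n)
    (hg : Function.Injective g) :
    (A.submatrix id g).rank = Fintype.card α := by
  classical
  set E : Matrix (Fin n) α K := (1 : Matrix (Fin n) (Fin n) K).submatrix id g with hE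
  have hAE : A.submatrix id g = A * E := by
    ext i j
    simp [E, Matrix.mul_apply, Matrix.one_apply]
  have hETE : Eᵀ * E = (1 : Matrix α α K) := by
    ext j j'
    simp only [Matrix.mul_apply, Matrix.transpose_apply, Matrix.submatrix_apply, id_eq,
      Matrix.one_apply, E, boole_mul]
    rw [Finset.sum_ite_eq' Finset.univ (g j)]
    simp [hg.eq_iff]
  have hErank : E.rank = Fintype.card α := by
    refine le_antisymm (E.rank_le_card_width.trans (by simp)) ?_
    calc Fintype.card α = (Eᵀ * E).rank := by rw [hETE, Matrix.rank_one]
    _ ≤ E.rank := Matrix.rank_mul_le_right _ _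
  have h1 : (A * E).rank ≤ Fintype.card α := hErank ▸ Matrix.rank_mul_le_right A E
  have h2 : Fintype.card α ≤ (A * E).rank := by
    have : E = A⁻¹ * (A * E) := by
      rw [← Matrix.mul_assoc, Matrix.nonsing_inv_mul A hA, Matrix.one_mul]
    calc Fintype.card α = E.rank := hErank.symm
    _ = (A⁻¹ * (A * E)).rank := by rw [← this]
    _ ≤ (A * E).rank := Matrix.rank_mul_le_right _ _
  rw [hAE]
  exact le_antisymm h1 h2

lemma pNondeg_of_unit (p : ℕ) [Fact p.Prime] {d : ℕ} (C : Matrix (Fin (d + 1)) (Fin (d + 1)) ℤ)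
    (h0 : C.det ≠ 0) (hpd : ¬ ((p : ℤ) ∣ C.det)) :
    PNondeg p C := by
  intro θ
  have hginj : Function.Injective (fun j : θ => (j : Fin (d + 1))) :=
    fun a b hab => Subtype.ext hab
  have hQ : IsUnit ((C.map (Int.cast : ℤ → ℚ)).det) := by
    have : (C.map (Int.cast : ℤ → ℚ)).det = ((C.det : ℤ) : ℚ) := by
      exact ((Int.castRingHom ℚ).map_det C).symm
    rw [this]
    exact isUnit_iff_ne_zero.mpr (by exact_mod_cast h0)
  have hZ : IsUnit ((C.map (Int.cast : ℤ → ZMod p)).det) := by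
    have : (C.map (Int.cast : ℤ → ZMod p)).det = ((C.det : ℤ) : ZMod p) := by
      exact ((Int.castRingHom (ZMod p)).map_det C).symm
    rw [this]
    refine isUnit_iff_ne_zero.mpr ?_
    rw [Ne, ZMod.intCast_zmod_eq_zero_iff_dvd]
    exact_mod_cast hpd
  rw [← Matrix.submatrix_map, ← Matrix.submatrix_map,
    rank_submatrix_unit _ hQ _ hginj, rank_submatrix_unit _ hZ _ hginj]

lemma map_mul_int {m n o : Type*} [Fintype n] {R : Type*} [CommRing R]
    (M : Matrix m n ℤ) (N : Matrix n o ℤ) :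
    (M * N).map (Int.cast : ℤ → R) = M.map Int.cast * N.map Int.cast := by
  ext i j
  simp only [Matrix.map_apply, Matrix.mul_apply]
  push_cast
  rfl

lemma det_map_int {n : Type*} [Fintype n] [DecidableEq n] {R : Type*} [CommRing R]
    (M : Matrix n n ℤ) : (M.map (Int.cast : ℤ → R)).det = (M.det : R) :=
  ((Int.castRingHom R).map_det M).symm

lemma tower_snoc (p d : ℕ) (A : Matrix (Fin (d + 1)) (Fin (d + 1)) ℤ) (r : ℕ)
    (P : Fin r → Matrix (Fin (d + 1)) (Fin (d + 1)) ℤ)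
    (Pn : Matrix (Fin (d + 1)) (Fin (d + 1)) ℤ) :
    tower p d A (r + 1) (Fin.snoc P Pn) =
      ((Fmat p d).map (Int.cast : ℤ → ℚ))⁻¹ * (Pn.map (Int.cast : ℤ → ℚ)) *
        tower p d A r P := by
  rw [tower]
  have h1 : (Fin.snoc P Pn : Fin (r + 1) → _) (Fin.last r) = Pn := Fin.snoc_last _ _
  have h2 : (fun i : Fin r => (Fin.snoc P Pn : Fin (r + 1) → _) i.castSucc) = P :=
    funext fun i => Fin.snoc_castSucc _ _ _
  rw [h1, h2]

lemma detFmat (p d : ℕ) : (Fmat p d).det = (p : ℤ) := by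
  rw [Fmat, Matrix.det_diagonal]
  rw [Finset.prod_ite_eq' Finset.univ (0 : Fin (d + 1)) (fun _ => (p : ℤ))]
  simp

lemma reduce (p : ℕ) (hp : p.Prime) (d : ℕ) (A : Matrix (Fin (d + 1)) (Fin (d + 1)) ℤ) :
    ∀ (k r : ℕ) (P : Fin r → Matrix (Fin (d + 1)) (Fin (d + 1)) ℤ)
      (N : Matrix (Fin (d + 1)) (Fin (d + 1)) ℤ),
      N.det.natAbs ≤ k → (∀ i, IsUnit (P i).det) → N.det ≠ 0 →
      (∃ q, Matrix.vecMul q N = fun _ => (1 : ℤ)) →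
      N.map (Int.cast : ℤ → ℚ) = tower p d A r P →
      ∃ (r' : ℕ) (P' : Fin r' → Matrix (Fin (d + 1)) (Fin (d + 1)) ℤ)
        (N' : Matrix (Fin (d + 1)) (Fin (d + 1)) ℤ),
        (∀ i, IsUnit (P' i).det) ∧ ¬ ((p : ℤ) ∣ N'.det) ∧
        (∃ q, Matrix.vecMul q N' = fun _ => (1 : ℤ)) ∧
        N'.map (Int.cast : ℤ → ℚ) = tower p d A r' P' := by
  haveI : Fact p.Prime := ⟨hp⟩
  have hprime : Prime (p : ℤ) := Int.prime_iff_natAbs_prime.mpr (by simpa using hp)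
  intro k
  induction k with
  | zero =>
    intro r P N hk _ hN0 _ _
    exact absurd (Int.natAbs_eq_zero.mp (Nat.le_zero.mp hk)) hN0
  | succ k ih =>
    intro r P N hk hP hN0 hq hmap
    by_cases hdvd : (p : ℤ) ∣ N.det
    · -- reduction step
      -- kernel vector mod p
      have hdet0 : (N.map (Int.cast : ℤ → ZMod p)).det = 0 :=
        ((Int.castRingHom (ZMod p)).map_det N).symm.trans
          ((ZMod.intCast_zmod_eq_zero_iff_dvd N.det p).mpr hdvd)
      obtain ⟨v, hv0, hv⟩ := Matrix.exists_vecMul_eq_zero_iff.mpr hdet0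
      obtain ⟨i₀, hi₀⟩ := Function.ne_iff.mp hv0
      set w : Fin (d + 1) → ℤ := fun i => ((v i).val : ℤ) with hw
      have hwv : ∀ i, ((w i : ℤ) : ZMod p) = v i := by
        intro i
        simp [hw, ZMod.natCast_val, ZMod.cast_id]
      have hpw : ¬ ((p : ℤ) ∣ w i₀) := by
        intro h
        exact hi₀ (by rw [← hwv i₀]; exact (ZMod.intCast_zmod_eq_zero_iff_dvd _ p).mpr h)
      -- gcd via principal ideal
      set I : Ideal ℤ := Ideal.span (Set.range w) with hI
      set g : ℤ := Submodule.IsPrincipal.generator I with hg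
      have hgdvd : ∀ i, g ∣ w i := by
        intro i
        rw [← Ideal.mem_span_singleton, Ideal.span_singleton_generator I]
        exact Ideal.subset_span (Set.mem_range_self i)
      have hpg : ¬ ((p : ℤ) ∣ g) := fun h => hpw (h.trans (hgdvd i₀))
      have hg0 : g ≠ 0 := by
        intro h
        apply hpw
        have hwi : w i₀ = 0 := zero_dvd_iff.mp (h ▸ hgdvd i₀)
        rw [hwi]
        exact dvd_zero _
      -- Bezout-type representation of g
      have hgmem : g ∈ Submodule.span ℤ (Set.range w) :=
        Submodule.IsPrincipal.generator_mem I
      obtain ⟨cg, hcg⟩ := (Submodule.mem_span_range_iff_exists_fun ℤ).mp hgmem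
      simp only [smul_eq_mul] at hcg
      set w' : Fin (d + 1) → ℤ := fun i => w i / g with hw'
      have hww' : ∀ i, w i = g * w' i := fun i => (Int.mul_ediv_cancel' (hgdvd i)).symm
      have hc1 : ∑ i, cg i * w' i = 1 := by
        have hgsum : g * (∑ i, cg i * w' i) = g := by
          rw [Finset.mul_sum]
          calc ∑ i, g * (cg i * w' i) = ∑ i, cg i * w i :=
                Finset.sum_congr rfl fun i _ => by rw [hww' i]; ring
          _ = g := hcg
        exact mul_left_cancel₀ hg0 (by rw [mul_one]; exact hgsum)
      -- divisibility of the row w' ᵥ* N by p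
      have hdvdrow : ∀ j, (p : ℤ) ∣ Matrix.vecMul w' N j := by
        intro j
        have hcast : ((Matrix.vecMul w N j : ℤ) : ZMod p) = 0 := by
          have : ((Matrix.vecMul w N j : ℤ) : ZMod p)
              = Matrix.vecMul v (N.map (Int.cast : ℤ → ZMod p)) j := by
            simp only [Matrix.vecMul, dotProduct, Matrix.map_apply]
            push_cast
            exact Finset.sum_congr rfl fun i _ => by rw [hwv i]
          rw [this, hv]
          rfl
        have hpwN : (p : ℤ) ∣ Matrix.vecMul w N j :=
          (ZMod.intCast_zmod_eq_zero_iff_dvd _ p).mp hcast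
        have hsplit : Matrix.vecMul w N j = g * Matrix.vecMul w' N j := by
          simp only [Matrix.vecMul, dotProduct, Finset.mul_sum]
          exact Finset.sum_congr rfl fun i _ => by rw [hww' i]; ring
        rw [hsplit] at hpwN
        exact (hprime.dvd_mul.mp hpwN).resolve_left hpg
      -- extend w' to a unimodular matrix
      obtain ⟨Pnew, hPu, hProw⟩ := exists_unimodular_row w' cg hc1
      -- the new integer matrix
      set N' : Matrix (Fin (d + 1)) (Fin (d + 1)) ℤ :=
        Matrix.of (fun i j => if i = 0 then (Pnew * N) i j / p else (Pnew * N) i j) with hN'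
      have hdvd0 : ∀ j, (p : ℤ) ∣ (Pnew * N) 0 j := by
        intro j
        have : (Pnew * N) 0 j = Matrix.vecMul w' N j := by
          rw [← hProw]
          simp [Matrix.mul_apply, Matrix.vecMul, dotProduct]
        rw [this]
        exact hdvdrow j
      have hFN' : Fmat p d * N' = Pnew * N := by
        ext i j
        rw [Fmat, Matrix.diagonal_mul]
        by_cases hi : i = 0
        · subst hi
          simp only [hN', Matrix.of_apply, if_true, eq_self_iff_true, ite_true]
          exact Int.mul_ediv_cancel' (hdvd0 j)
        · simp only [hN', Matrix.of_apply, if_neg hi, one_mul]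
      have hdetF : (Fmat p d).det = (p : ℤ) := detFmat p d
      have hdetstep : (p : ℤ) * N'.det = Pnew.det * N.det := by
        rw [← hdetF, ← Matrix.det_mul, hFN', Matrix.det_mul]
      have hPu1 : Pnew.det.natAbs = 1 := Int.isUnit_iff_natAbs_eq.mp hPu
      have hN'0 : N'.det ≠ 0 := by
        intro h
        rw [h, mul_zero] at hdetstep
        exact (mul_ne_zero (hPu.ne_zero) hN0) hdetstep.symm
      have hnatstep : N'.det.natAbs * p = N.det.natAbs := by
        have := congrArg Int.natAbs hdetstep
        rw [Int.natAbs_mul, Int.natAbs_mul, hPu1, one_mul, Int.natAbs_natCast] at this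
        rw [mul_comm] at this
        exact this
      have hk' : N'.det.natAbs ≤ k := by
        have h1 : 1 ≤ N'.det.natAbs := Nat.one_le_iff_ne_zero.mpr (Int.natAbs_ne_zero.mpr hN'0)
        have h2 : 2 ≤ p := hp.two_le
        have h3 : N'.det.natAbs * 2 ≤ N'.det.natAbs * p :=
          Nat.mul_le_mul_left _ h2
        omega
      -- new invariant vector
      obtain ⟨q, hqq⟩ := hq
      have hPinv : Pnew⁻¹ * Pnew = 1 := Matrix.nonsing_inv_mul Pnew hPu
      have hq' : Matrix.vecMul (Matrix.vecMul q (Pnew⁻¹ * Fmat p d)) N' = fun _ => (1 : ℤ) := by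
        rw [Matrix.vecMul_vecMul, Matrix.mul_assoc, hFN', ← Matrix.mul_assoc, hPinv,
          Matrix.one_mul]
        exact hqq
      -- map equation
      have hFu : IsUnit (((Fmat p d).map (Int.cast : ℤ → ℚ)).det) := by
        rw [det_map_int, hdetF]
        exact isUnit_iff_ne_zero.mpr (by exact_mod_cast hp.ne_zero)
      have hmapmul : (Fmat p d).map (Int.cast : ℤ → ℚ) * N'.map (Int.cast : ℤ → ℚ)
          = Pnew.map (Int.cast : ℤ → ℚ) * N.map (Int.cast : ℤ → ℚ) := by
        exact (map_mul_int (R := ℚ) _ _).symm.trans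
          ((congrArg (fun M => Matrix.map M (Int.cast : ℤ → ℚ)) hFN').trans (map_mul_int _ _))
      have hmap' : N'.map (Int.cast : ℤ → ℚ) = tower p d A (r + 1) (Fin.snoc P Pnew) := by
        rw [tower_snoc]
        rw [← hmap, Matrix.mul_assoc, ← hmapmul, ← Matrix.mul_assoc,
          Matrix.nonsing_inv_mul _ hFu, Matrix.one_mul]
      have hPsnoc : ∀ i : Fin (r + 1), IsUnit ((Fin.snoc P Pnew : Fin (r+1) → _) i).det := by
        intro i
        refine Fin.lastCases ?_ ?_ i
        · rw [Fin.snoc_last]; exact hPu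
        · intro j; rw [Fin.snoc_castSucc]; exact hP j
      exact ih (r + 1) (Fin.snoc P Pnew) N' hk' hPsnoc hN'0
        ⟨Matrix.vecMul q (Pnew⁻¹ * Fmat p d), hq'⟩ hmap' 
    · exact ⟨r, P, N, hP, hdvd, hq, hmap⟩

lemma isUnit_of_rank_eq {n : ℕ} (M : Matrix (Fin n) (Fin n) ℚ) (h : M.rank = n) :
    IsUnit M.det := by
  have hfin : Module.finrank ℚ (LinearMap.range M.mulVecLin) =
      Module.finrank ℚ (Fin n → ℚ) := by
    rw [Module.finrank_fin_fun]
    simpa [Matrix.rank] using h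
  have hsurj : Function.Surjective M.mulVec := by
    have hrg : LinearMap.range M.mulVecLin = ⊤ := Submodule.eq_top_of_finrank_eq hfin
    have := LinearMap.range_eq_top.mp hrg
    intro y
    obtain ⟨x, hx⟩ := this y
    exact ⟨x, by simpa [Matrix.mulVecLin_apply] using hx⟩
  exact (Matrix.isUnit_iff_isUnit_det M).mp (Matrix.mulVec_surjective_iff_isUnit.mp hsurj)

/-- for a non-confluent square integer matrix `A`, there exist `r ≥ 0`,
`P₁, …, P_r, P ∈ GL(d+1, ℤ)` and a `d × (d+1)` integer matrix `B` which is
sub-non-confluent and sub-`p`-nondegenerate, such that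
`P ⬝ F⁻¹ P_r ⋯ F⁻¹ P₁ ⬝ A = B̂`. -/
theorem stmt15 (p : ℕ) (hp : p.Prime) (d : ℕ)
    (A : Matrix (Fin (d + 1)) (Fin (d + 1)) ℤ) (hA : NonConfluent A) :
    ∃ r : ℕ, ∃ P : Fin r → Matrix (Fin (d + 1)) (Fin (d + 1)) ℤ,
      ∃ Q : Matrix (Fin (d + 1)) (Fin (d + 1)) ℤ,
        (∀ i, IsUnit (P i).det) ∧ IsUnit Q.det ∧
        ∃ B : Matrix (Fin d) (Fin (d + 1)) ℤ,
          SubNonConfluent B ∧ SubPNondeg p B ∧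
          (Q.map (Int.cast : ℤ → ℚ)) * tower p d A r P =
            (hatMat B).map (Int.cast : ℤ → ℚ) := by
  classical
  haveI : Fact p.Prime := ⟨hp⟩
  have hprime : Prime (p : ℤ) := Int.prime_iff_natAbs_prime.mpr (by simpa using hp)
  obtain ⟨P0, hP0u, hrow, hrank⟩ := hA
  have hMu : IsUnit (((P0 * A).map (Int.cast : ℤ → ℚ)).det) :=
    isUnit_of_rank_eq _ hrank
  have hdetA : A.det ≠ 0 := by
    rw [det_map_int] at hMu
    have h1 : ((P0 * A).det : ℚ) ≠ 0 := hMu.ne_zero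
    have h2 : (P0 * A).det ≠ 0 := by exact_mod_cast h1
    rw [Matrix.det_mul] at h2
    exact fun h => h2 (by rw [h, mul_zero])
  have hq0 : Matrix.vecMul (fun i => P0 0 i) A = fun _ => (1 : ℤ) := by
    funext j
    have h := hrow j
    rw [Matrix.mul_apply] at h
    exact h
  obtain ⟨r', P', N', hP', hpdvd, ⟨q, hqN⟩, hmapN⟩ :=
    reduce p hp d A A.det.natAbs 0 Fin.elim0 A le_rfl (fun i => i.elim0) hdetA
      ⟨fun i => P0 0 i, hq0⟩ rfl
  have hN'0 : N'.det ≠ 0 := fun h => hpdvd (h ▸ dvd_zero _)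
  have hc : ∑ i, (fun i => N' i 0) i * q i = 1 := by
    have h := congrFun hqN 0
    simp only [Matrix.vecMul, dotProduct] at h
    rw [← h]
    exact Finset.sum_congr rfl fun i _ => mul_comm _ _
  obtain ⟨Q, hQu, hQrow⟩ := exists_unimodular_row q (fun i => N' i 0) hc
  set C : Matrix (Fin (d + 1)) (Fin (d + 1)) ℤ := Q * N' with hC
  have hC0 : ∀ j, C 0 j = 1 := by
    intro j
    have h := congrFun hqN j
    rw [hC, Matrix.mul_apply, hQrow]
    exact h
  set B : Matrix (Fin d) (Fin (d + 1)) ℤ := Matrix.of fun i' j => C i'.succ j with hB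
  have hhat : hatMat B = C := by
    ext i j
    refine Fin.cases ?_ ?_ i
    · show (1 : ℤ) = C 0 j
      exact (hC0 j).symm
    · intro i'
      rfl
  have hdetC : C.det = Q.det * N'.det := Matrix.det_mul _ _
  have hCp : ¬ ((p : ℤ) ∣ C.det) := by
    intro h
    rw [hdetC] at h
    rcases hprime.dvd_mul.mp h with h1 | h2
    · exact hprime.not_unit (isUnit_of_dvd_unit h1 hQu)
    · exact hpdvd h2
  have hC0' : C.det ≠ 0 := fun h => hCp (h ▸ dvd_zero _)
  have hCQunit : IsUnit ((C.map (Int.cast : ℤ → ℚ)).det) := by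
    rw [det_map_int]
    exact isUnit_iff_ne_zero.mpr (by exact_mod_cast hC0')
  refine ⟨r', P', Q, hP', hQu, B, ?_, ?_, ?_⟩
  · show ((hatMat B).map (Int.cast : ℤ → ℚ)).rank = d + 1
    rw [hhat]
    rw [Matrix.rank_of_isUnit _ ((Matrix.isUnit_iff_isUnit_det _).mpr hCQunit)]
    exact Fintype.card_fin _
  · show PNondeg p (hatMat B)
    rw [hhat]
    exact pNondeg_of_unit p C hC0' hCp
  · rw [← hmapN, hhat, hC]
    exact (map_mul_int Q N').symm
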